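/- For all n ≥ k ≥ 2, the number of permutations of [n] avoiding the partially ordered pattern Q_k equals (k-1)! · (k-1)^{n-k+1}. -/

import Mathlib

/-- A permutation `π` of `Fin n` contains the POP `Q_k` (poset on `{1,…,k}` where
element 1 is greater than every other element) iff there is a position `i`
followed by `k-1` increasing positions, all of whose values are smaller than `π i`. -/
def ContainsQ (k n : ℕ) (π : Equiv.Perm (Fin n)) : Prop :=
  ∃ (i : Fin n) (f : Fin (k - 1) → Fin n), StrictMono f ∧
    (∀ j, i < f j) ∧ ∀ j, π (f j) < π i

/-- If `k-1` injectively-indexed values are all below `π i`, then `π i ≥ k-1`. -/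
lemma val_ge_of_witness {k n : ℕ} (π : Equiv.Perm (Fin n)) (i : Fin n)
    (f : Fin (k - 1) → Fin n) (hf : Function.Injective f)
    (hv : ∀ j, π (f j) < π i) : k - 1 ≤ (π i : ℕ) := by
  have h1 : (Finset.univ.image (⇑π ∘ f)).card = k - 1 := by
    rw [Finset.card_image_of_injective _ (π.injective.comp hf)]
    simp
  have h2 : (Finset.univ.image (⇑π ∘ f)) ⊆ Finset.Iio (π i) := by
    intro x hx
    simp only [Finset.mem_image] at hx
    obtain ⟨j, _, rfl⟩ := hx
    exact Finset.mem_Iio.mpr (hv j)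
  have h3 := Finset.card_le_card h2
  rwa [h1, Fin.card_Iio] at h3

lemma not_containsQ_of_le {k m : ℕ} (hm : m ≤ k - 1) (π : Equiv.Perm (Fin m)) :
    ¬ ContainsQ k m π := by
  rintro ⟨i, f, hf, -, hv⟩
  have h1 := val_ge_of_witness π i f hf.injective hv
  have h2 := (π i).isLt
  omega

lemma containsQ_of_zero {k n : ℕ} (π : Equiv.Perm (Fin (n + 1)))
    (h : k - 1 ≤ (π 0 : ℕ)) : ContainsQ k (n + 1) π := by
  set T : Finset (Fin (n + 1)) := (Finset.Iio (π 0)).image π.symm with hT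
  have hTcard : T.card = (π 0 : ℕ) := by
    rw [hT, Finset.card_image_of_injective _ π.symm.injective, Fin.card_Iio]
  obtain ⟨S, hST, hScard⟩ := Finset.exists_subset_card_eq (s := T) (n := k - 1) (by omega)
  set f := S.orderEmbOfFin hScard with hfdef
  have hπ : ∀ j, π (f j) < π 0 := by
    intro j
    have hmem : f j ∈ T := hST (S.orderEmbOfFin_mem hScard j)
    rw [hT, Finset.mem_image] at hmem
    obtain ⟨v, hv, hveq⟩ := hmem
    rw [← hveq, Equiv.apply_symm_apply]
    exact Finset.mem_Iio.mp hv
  refine ⟨0, fun j => f j, f.strictMono, ?_, hπ⟩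
  intro j
  rw [Fin.pos_iff_ne_zero]
  intro h0
  have h0' : f j = 0 := h0
  have := hπ j
  rw [h0'] at this
  exact lt_irrefl _ this

/-- The pattern of the tail of a permutation of `Fin (n+1)`. -/
def tailPerm {n : ℕ} (π : Equiv.Perm (Fin (n + 1))) : Equiv.Perm (Fin n) :=
  Equiv.removeNone ((finSuccEquiv n).symm.trans (π.trans (finSuccEquiv' (π 0))))

lemma tailPerm_spec {n : ℕ} (π : Equiv.Perm (Fin (n + 1))) (j : Fin n) :
    π j.succ = (π 0).succAbove (tailPerm π j) := by
  have hne : π j.succ ≠ π 0 := fun h => Fin.succ_ne_zero j (π.injective h)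
  obtain ⟨y, hy⟩ := Fin.exists_succAbove_eq hne
  set e := (finSuccEquiv n).symm.trans (π.trans (finSuccEquiv' (π 0))) with he
  have hsome : e (some j) = some y := by
    simp only [he, Equiv.trans_apply, finSuccEquiv_symm_some]
    rw [← hy, finSuccEquiv'_succAbove]
  have := Equiv.removeNone_some e ⟨y, hsome⟩
  rw [hsome] at this
  have hty : tailPerm π j = y := Option.some_injective _ this
  rw [hty, hy]

/-- Build a permutation of `Fin (n+1)` from a first value and a tail pattern. -/
def consPerm {n : ℕ} (p : Fin (n + 1)) (σ : Equiv.Perm (Fin n)) :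
    Equiv.Perm (Fin (n + 1)) :=
  (finSuccEquiv n).trans ((Equiv.optionCongr σ).trans (finSuccEquiv' p).symm)

lemma consPerm_zero {n : ℕ} (p : Fin (n + 1)) (σ : Equiv.Perm (Fin n)) :
    consPerm p σ 0 = p := by
  simp [consPerm, finSuccEquiv_zero, finSuccEquiv'_symm_none]

lemma consPerm_succ {n : ℕ} (p : Fin (n + 1)) (σ : Equiv.Perm (Fin n)) (j : Fin n) :
    consPerm p σ j.succ = p.succAbove (σ j) := by
  simp [consPerm, finSuccEquiv_succ, finSuccEquiv'_symm_some]

/-- Decomposition of a permutation of `Fin (n+1)` into first value and tail pattern. -/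
def decomposePerm (n : ℕ) : Equiv.Perm (Fin (n + 1)) ≃ Fin (n + 1) × Equiv.Perm (Fin n) where
  toFun π := (π 0, tailPerm π)
  invFun x := consPerm x.1 x.2
  left_inv π := by
    ext x
    induction x using Fin.cases with
    | zero => rw [consPerm_zero]
    | succ j => rw [consPerm_succ, ← tailPerm_spec]
  right_inv x := by
    obtain ⟨p, σ⟩ := x
    have h0 : consPerm p σ 0 = p := consPerm_zero p σ
    refine Prod.ext h0 (Equiv.ext fun j => ?_)
    show tailPerm (consPerm p σ) j = σ j
    have hspec := tailPerm_spec (consPerm p σ) j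
    rw [h0, consPerm_succ] at hspec
    exact (Fin.succAbove_right_injective hspec).symm

lemma containsQ_succ_iff {k n : ℕ} (hk : 2 ≤ k) (hn : k ≤ n + 1)
    (π : Equiv.Perm (Fin (n + 1))) :
    ContainsQ k (n + 1) π ↔ (k - 1 ≤ (π 0 : ℕ) ∨ ContainsQ k n (tailPerm π)) := by
  constructor
  · rintro ⟨i, f, hf, hfi, hv⟩
    rcases Fin.eq_zero_or_eq_succ i with rfl | ⟨i', rfl⟩
    · exact Or.inl (val_ge_of_witness π 0 f hf.injective hv)
    · right
      have hfj : ∀ j, ∃ m : Fin n, f j = m.succ := by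
        intro j
        refine Fin.eq_succ_of_ne_zero ?_
        intro h0
        have := hfi j
        rw [h0] at this
        exact absurd this (Fin.not_lt_zero _).elim
      choose g hg using hfj
      refine ⟨i', g, ?_, ?_, ?_⟩
      · intro a b hab
        have h := hf hab
        rw [hg a, hg b, Fin.succ_lt_succ_iff] at h
        exact h
      · intro j
        have h := hfi j
        rw [hg j, Fin.succ_lt_succ_iff] at h
        exact h
      · intro j
        have h := hv j
        rw [hg j, tailPerm_spec, tailPerm_spec, Fin.succAbove_lt_succAbove_iff] at h
        exact h
  · rintro (h | ⟨i, f, hf, hfi, hv⟩)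
    · exact containsQ_of_zero π h
    · refine ⟨i.succ, fun j => (f j).succ, ?_, ?_, ?_⟩
      · intro a b hab
        rw [Fin.succ_lt_succ_iff]
        exact hf hab
      · intro j
        rw [Fin.succ_lt_succ_iff]
        exact hfi j
      · intro j
        rw [tailPerm_spec, tailPerm_spec, Fin.succAbove_lt_succAbove_iff]
        exact hv j

lemma card_first_values {k n : ℕ} (hn : k ≤ n + 1) :
    Nat.card {a : Fin (n + 1) // (a : ℕ) < k - 1} = k - 1 := by
  have e : {a : Fin (n + 1) // (a : ℕ) < k - 1} ≃ Fin (k - 1) :=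
    { toFun := fun a => ⟨(a.1 : ℕ), a.2⟩
      invFun := fun b => ⟨⟨(b : ℕ), by omega⟩, b.isLt⟩
      left_inv := fun a => rfl
      right_inv := fun b => rfl }
  rw [Nat.card_congr e]
  simp

lemma card_step {k n : ℕ} (hk : 2 ≤ k) (hn : k ≤ n + 1) :
    Nat.card {π : Equiv.Perm (Fin (n + 1)) // ¬ ContainsQ k (n + 1) π}
      = (k - 1) * Nat.card {σ : Equiv.Perm (Fin n) // ¬ ContainsQ k n σ} := by
  have e1 : {π : Equiv.Perm (Fin (n + 1)) // ¬ ContainsQ k (n + 1) π}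
      ≃ {x : Fin (n + 1) × Equiv.Perm (Fin n) //
          ((x.1 : ℕ) < k - 1) ∧ ¬ ContainsQ k n x.2} :=
    (decomposePerm n).subtypeEquiv (fun π => by
      rw [containsQ_succ_iff hk hn, not_or, Nat.not_le]
      exact Iff.rfl)
  rw [Nat.card_congr e1, Nat.card_congr (Equiv.subtypeProdEquivProd (p := fun a : Fin (n + 1) => (a : ℕ) < k - 1) (q := fun σ : Equiv.Perm (Fin n) => ¬ ContainsQ k n σ)), Nat.card_prod,
    card_first_values hn]

theorem stmt_0 (n k : ℕ) (hk : 2 ≤ k) (hkn : k ≤ n) :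
    Nat.card {π : Equiv.Perm (Fin n) // ¬ ContainsQ k n π} =
      Nat.factorial (k - 1) * (k - 1) ^ (n - k + 1) := by
  have key : ∀ m : ℕ,
      Nat.card {π : Equiv.Perm (Fin (k - 1 + m)) // ¬ ContainsQ k (k - 1 + m) π}
        = Nat.factorial (k - 1) * (k - 1) ^ m := by
    intro m
    induction m with
    | zero =>
      rw [Nat.card_congr (Equiv.subtypeUnivEquiv
        (fun π => not_containsQ_of_le (by omega) π))]
      simp [Nat.card_eq_fintype_card, Fintype.card_perm]
    | succ m ih =>
      have hstep := card_step (k := k) (n := k - 1 + m) hk (by omega)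
      rw [show k - 1 + (m + 1) = (k - 1 + m) + 1 from rfl, hstep, ih, pow_succ]
      ring
  have h := key (n - k + 1)
  have hEq : k - 1 + (n - k + 1) = n := by omega
  rw [hEq] at h
  exact h
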